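/- arXiv:1410.1581 — 2 statements merged into one kernel-verified Lean document; each statement's English description precedes it below -/
import Mathlib

section
/- For the d-dimensional heat kernel and the Riesz kernel f(x) = |x|^{-β} with 0 < β < min(2,d), for every fixed nonzero w ∈ ℝ^d there is a constant C > 0 (depending on d, β) such that for all ε > 0, ∫_0^ε ∫_{ℝ^d} ∫_{ℝ^d} p_r(x) p_r(y + w) |x - y|^{-β} dx dy dr ≤ C ε |w|^{-β}. -/
open MeasureTheory Real Set Metric
set_option maxHeartbeats 2000000


noncomputable def heatKernel (d : ℕ) (r : ℝ) (x : EuclideanSpace ℝ (Fin d)) : ℝ :=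
  (2 * Real.pi * r) ^ (-(d : ℝ) / 2) * Real.exp (-‖x‖ ^ 2 / (2 * r))

lemma heatKernel_eq (d : ℕ) {r : ℝ} (hr : 0 < r) :
    heatKernel d r = fun x => (2 * π * r) ^ (-(d : ℝ) / 2) * rexp (-(1/(2*r)) * ‖x‖ ^ 2) := by
  funext x
  rw [heatKernel, show -‖x‖ ^ 2 / (2*r) = -(1/(2*r)) * ‖x‖ ^ 2 by ring]

lemma integrable_heatKernel (d : ℕ) {r : ℝ} (hr : 0 < r) :
    Integrable (heatKernel d r) := by
  have hb : (0:ℝ) < 1 / (2 * r) := by positivity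
  have h1 : Integrable (fun v : EuclideanSpace ℝ (Fin d) => rexp (-(1/(2*r)) * ‖v‖ ^ 2)) := by
    have h2 := (GaussianFourier.integrable_cexp_neg_mul_sq_norm_add
      (b := ((1/(2*r) : ℝ) : ℂ)) (by simpa using hb) 0 (0 : EuclideanSpace ℝ (Fin d))).norm
    refine h2.congr (Filter.Eventually.of_forall fun v => ?_)
    have : ((‖v‖:ℂ) ^ 2).re = ‖v‖ ^ 2 := by
      norm_cast
    simp [Complex.norm_exp, this]
  rw [heatKernel_eq d hr]
  exact h1.const_mul _

lemma integral_heatKernel (d : ℕ) {r : ℝ} (hr : 0 < r) :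
    ∫ x : EuclideanSpace ℝ (Fin d), heatKernel d r x = 1 := by
  have hb : (0:ℝ) < 1 / (2 * r) := by positivity
  rw [heatKernel_eq d hr]
  rw [MeasureTheory.integral_const_mul, GaussianFourier.integral_rexp_neg_mul_sq_norm hb,
    finrank_euclideanSpace_fin]
  rw [show π / (1/(2*r)) = 2 * π * r by field_simp]
  rw [← Real.rpow_add (by positivity)]
  rw [show (-(d:ℝ) / 2 + (d:ℝ) / 2) = 0 by ring, Real.rpow_zero]


lemma measurable_riesz (β : ℝ) (hβ : 0 < β) (d : ℕ) :
    Measurable (fun z : EuclideanSpace ℝ (Fin d) => ‖z‖ ^ (-β)) := by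
  have hg : Measurable (fun t : ℝ => if t = 0 then 0 else rexp (Real.log t * (-β))) :=
    Measurable.ite (measurableSet_eq) measurable_const
      ((Real.measurable_log.mul measurable_const).exp)
  have : (fun z : EuclideanSpace ℝ (Fin d) => ‖z‖ ^ (-β))
      = (fun t : ℝ => if t = 0 then 0 else rexp (Real.log t * (-β))) ∘ (fun z => ‖z‖) := by
    funext z
    by_cases h : ‖z‖ = 0
    · simp [h, Real.zero_rpow (by linarith : -β ≠ 0)]
    · simp only [Function.comp_apply, if_neg h]
      rw [Real.rpow_def_of_pos (lt_of_le_of_ne (norm_nonneg z) (Ne.symm h)), mul_comm]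
  rw [this]
  exact hg.comp measurable_norm

lemma integrable_riesz_ball (d : ℕ) (hd : 1 ≤ d) {β : ℝ} (hβ0 : 0 < β) (hβd : β < (d:ℝ))
    {R : ℝ} (hR : 0 < R) :
    Integrable ((Metric.ball (0 : EuclideanSpace ℝ (Fin d)) R).indicator
      (fun z => ‖z‖ ^ (-β))) := by
  haveI : Nonempty (Fin d) := ⟨⟨0, hd⟩⟩
  haveI : Nontrivial (EuclideanSpace ℝ (Fin d)) := (WithLp.equiv 2 (∀ _ : Fin d, ℝ)).nontrivial
  set E := EuclideanSpace ℝ (Fin d)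
  constructor
  · exact (((measurable_riesz β hβ0 d).indicator measurableSet_ball)).aestronglyMeasurable
  · rw [hasFiniteIntegral_iff_norm]
    have hnn : ∀ z : E, (0:ℝ) ≤ ‖z‖ ^ (-β) := fun z => Real.rpow_nonneg (norm_nonneg z) _
    have heq : (fun a : E => ENNReal.ofReal ‖(Metric.ball (0:E) R).indicator (fun z => ‖z‖ ^ (-β)) a‖)
        = (Metric.ball (0:E) R).indicator (fun z => ENNReal.ofReal (‖z‖ ^ (-β))) := by
      funext a
      by_cases ha : a ∈ Metric.ball (0:E) R <;>
        simp [Set.indicator_of_mem, Set.indicator_of_notMem, ha, Real.norm_eq_abs,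
          abs_of_nonneg (hnn a)]
    rw [heq, lintegral_indicator measurableSet_ball]
    set F : E → ENNReal := fun z => ENNReal.ofReal (‖z‖ ^ (-β)) with hF
    set S : ℕ → Set E := fun n => Metric.ball 0 (R/2^n) \ Metric.ball 0 (R/2^(n+1)) with hS
    -- covering
    have hsub : Metric.ball (0:E) R ⊆ {0} ∪ ⋃ n, S n := by
      intro x hx
      by_cases hx0 : x = (0:E)
      · exact Or.inl (by simp [hx0])
      right
      have hxn : (0:ℝ) < ‖x‖ := norm_pos_iff.2 hx0
      have hxR : ‖x‖ < R := by simpa [mem_ball_zero_iff] using hx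
      have H : ∃ m : ℕ, R / 2 ^ (m+1) ≤ ‖x‖ := by
        obtain ⟨m, hm⟩ := pow_unbounded_of_one_lt (R / ‖x‖) (one_lt_two (α := ℝ))
        refine ⟨m, ?_⟩
        rw [div_le_iff₀ (by positivity)]
        rw [div_lt_iff₀ hxn] at hm
        have h2 : (2:ℝ)^m ≤ 2^(m+1) := by
          apply pow_le_pow_right₀ (by norm_num) (Nat.le_succ m)
        nlinarith
      refine Set.mem_iUnion.2 ⟨Nat.find H, ?_, ?_⟩
      · rw [mem_ball_zero_iff]
        rcases Nat.eq_zero_or_pos (Nat.find H) with h | h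
        · simpa [h] using hxR
        · have hmin := Nat.find_min H (show Nat.find H - 1 < Nat.find H by omega)
          push_neg at hmin
          rwa [show Nat.find H - 1 + 1 = Nat.find H by omega] at hmin
      · show x ∉ Metric.ball (0:E) (R / 2 ^ (Nat.find H + 1))
        rw [mem_ball_zero_iff]
        push_neg
        exact Nat.find_spec H
    calc ∫⁻ a in Metric.ball (0:E) R, F a
        ≤ ∫⁻ a in ({0} ∪ ⋃ n, S n : Set E), F a := lintegral_mono_set hsub
      _ ≤ (∫⁻ a in ({0} : Set E), F a) + ∫⁻ a in (⋃ n, S n), F a := lintegral_union_le _ _ _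
      _ ≤ 0 + ∑' n, ∫⁻ a in S n, F a := by
          gcongr
          · exact le_of_eq (setLIntegral_measure_zero _ _ (measure_singleton 0))
          · exact lintegral_iUnion_le _ _
      _ < ⊤ := by
          rw [zero_add]
          have hhalf : ((1:ℝ)/2)^(-β) = (2:ℝ)^β := by
            rw [Real.rpow_neg (by positivity), one_div,
              Real.inv_rpow (by norm_num : (0:ℝ) ≤ 2), inv_inv]
          set q : ℝ := (2:ℝ)^β * ((1:ℝ)/2)^d with hq
          set c0 : ℝ := (R/2)^(-β) * R^d with hc0
          have hq1 : q < 1 := by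
            have h2 : (2:ℝ)^β < 2^(d:ℕ) := by
              have := Real.rpow_lt_rpow_of_exponent_lt (by norm_num : (1:ℝ) < 2) hβd
              rwa [Real.rpow_natCast] at this
            have hp : (0:ℝ) < 2^(d:ℕ) := by positivity
            rw [hq, div_pow, one_pow, mul_one_div, div_lt_one hp]
            exact h2
          have key : ∀ n : ℕ, (R/2^(n+1))^(-β) * (R/2^n)^d = c0 * q^n := by
            intro n
            have e1 : R/2^(n+1) = (R/2) * ((1:ℝ)/2)^n := by
              rw [one_div, inv_pow, pow_succ, mul_comm ((2:ℝ)^n) 2, ← div_div, div_eq_mul_inv (R/2)]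
            have e2 : R/2^n = R * ((1:ℝ)/2)^n := by rw [one_div, inv_pow, div_eq_mul_inv]
            rw [e1, e2, Real.mul_rpow (by positivity) (by positivity),
              ← Real.rpow_natCast ((1:ℝ)/2) n, ← Real.rpow_mul (by norm_num),
              mul_comm (n:ℝ) (-β), Real.rpow_mul (by norm_num), Real.rpow_natCast,
              hhalf, hq, hc0]
            rw [Real.rpow_natCast ((1:ℝ)/2) n]
            ring
          have hterm : ∀ n : ℕ, ∫⁻ a in S n, F a ≤
              (ENNReal.ofReal c0 * volume (Metric.ball (0:E) 1)) * (ENNReal.ofReal q)^n := by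
            intro n
            have hrn : (0:ℝ) < R/2^(n+1) := by positivity
            have hbound : ∀ a ∈ S n, F a ≤ ENNReal.ofReal ((R/2^(n+1))^(-β)) := by
              intro a ha
              apply ENNReal.ofReal_le_ofReal
              have hmem : R/2^(n+1) ≤ ‖a‖ := by
                have h2 := ha.2
                rw [mem_ball_zero_iff] at h2
                linarith [not_lt.1 h2]
              exact Real.rpow_le_rpow_of_nonpos hrn hmem (neg_nonpos.2 hβ0.le)
            calc ∫⁻ a in S n, F a
                ≤ ∫⁻ _a in S n, ENNReal.ofReal ((R/2^(n+1))^(-β)) :=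
                  setLIntegral_mono' (measurableSet_ball.diff measurableSet_ball) hbound
              _ = ENNReal.ofReal ((R/2^(n+1))^(-β)) * volume (S n) := setLIntegral_const _ _
              _ ≤ ENNReal.ofReal ((R/2^(n+1))^(-β)) * volume (Metric.ball (0:E) (R/2^n)) := by
                  gcongr
                  exact Set.diff_subset
              _ = ENNReal.ofReal ((R/2^(n+1))^(-β)) *
                    (ENNReal.ofReal ((R/2^n)^d) * volume (Metric.ball (0:E) 1)) := by
                  rw [Measure.addHaar_ball volume (0:E) (by positivity : (0:ℝ) ≤ R/2^n),
                    finrank_euclideanSpace_fin]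
              _ = ENNReal.ofReal ((R/2^(n+1))^(-β) * (R/2^n)^d) * volume (Metric.ball (0:E) 1) := by
                  rw [← mul_assoc, ← ENNReal.ofReal_mul (by positivity)]
              _ = (ENNReal.ofReal c0 * volume (Metric.ball (0:E) 1)) * (ENNReal.ofReal q)^n := by
                  rw [key n, ENNReal.ofReal_mul (by positivity), ENNReal.ofReal_pow (by positivity)]
                  ring
          calc ∑' n, ∫⁻ a in S n, F a
              ≤ ∑' n, (ENNReal.ofReal c0 * volume (Metric.ball (0:E) 1)) * (ENNReal.ofReal q)^n :=
                ENNReal.tsum_le_tsum hterm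
            _ = (ENNReal.ofReal c0 * volume (Metric.ball (0:E) 1)) * ∑' n, (ENNReal.ofReal q)^n :=
                ENNReal.tsum_mul_left
            _ < ⊤ := by
                rw [ENNReal.tsum_geometric]
                refine ENNReal.mul_lt_top (ENNReal.mul_lt_top ENNReal.ofReal_lt_top
                  measure_ball_lt_top) ?_
                exact ENNReal.inv_lt_top.2 (tsub_pos_of_lt (ENNReal.ofReal_lt_one.2 hq1))


lemma gauss_factor_le (d : ℕ) (hd : 1 ≤ d) {r c : ℝ} (hr : 0 < r) (hc : 0 < c) :
    (2*π*r) ^ (-(d:ℝ)/2) * rexp (-c/r) ≤ (2*π)^(-(d:ℝ)/2) * (c^(-(d:ℝ)/2) * (1 + (d:ℝ)^d)) := by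
  have hd0 : (0:ℝ) < d := by exact_mod_cast hd
  obtain ⟨t, ht0, hrt⟩ : ∃ t : ℝ, 0 < t ∧ r = c / t := ⟨c/r, by positivity, by field_simp⟩
  have hcr : c / r = t := by rw [hrt]; field_simp
  have h2π : (0:ℝ) < 2*π := by positivity
  have e1 : (2*π*r) ^ (-(d:ℝ)/2) = (2*π)^(-(d:ℝ)/2) * (c^(-(d:ℝ)/2) * t^((d:ℝ)/2)) := by
    rw [Real.mul_rpow h2π.le hr.le, hrt, Real.div_rpow hc.le ht0.le, neg_div,
      Real.rpow_neg ht0.le]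
    field_simp
  rw [e1, show -c/r = -t from by rw [neg_div, hcr]]
  have main : t^((d:ℝ)/2) * rexp (-t) ≤ 1 + (d:ℝ)^d := ?_
  · calc (2*π)^(-(d:ℝ)/2) * (c^(-(d:ℝ)/2) * t^((d:ℝ)/2)) * rexp (-t)
        = ((2*π)^(-(d:ℝ)/2) * c^(-(d:ℝ)/2)) * (t^((d:ℝ)/2) * rexp (-t)) := by ring
      _ ≤ ((2*π)^(-(d:ℝ)/2) * c^(-(d:ℝ)/2)) * (1 + (d:ℝ)^d) :=
          mul_le_mul_of_nonneg_left main (by positivity)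
      _ = (2*π)^(-(d:ℝ)/2) * (c^(-(d:ℝ)/2) * (1 + (d:ℝ)^d)) := by ring
  rcases le_or_gt t 1 with h1 | h1
  · have ha : t^((d:ℝ)/2) ≤ 1 := Real.rpow_le_one ht0.le h1 (by positivity)
    have hb : rexp (-t) ≤ 1 := Real.exp_le_one_iff.2 (by linarith)
    nlinarith [Real.exp_nonneg (-t), pow_nonneg hd0.le d, Real.rpow_nonneg ht0.le ((d:ℝ)/2)]
  · have ha : t^((d:ℝ)/2) ≤ t^(d:ℝ) := by
      apply Real.rpow_le_rpow_of_exponent_le h1.le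
      linarith
    rw [Real.rpow_natCast] at ha
    have hb : t^d * rexp (-t) ≤ (d:ℝ)^d := by
      have h3 : t / d ≤ rexp (t / d) := by
        have := Real.add_one_le_exp (t/d)
        linarith
      have h4 : (t/d)^d ≤ (rexp (t/d))^d :=
        pow_le_pow_left₀ (by positivity) h3 d
      rw [← Real.exp_nat_mul] at h4
      have h5 : (d:ℝ) * (t/d) = t := by field_simp
      rw [h5] at h4
      have h6 : (t/(d:ℝ))^d * (d:ℝ)^d = t^d := by
        rw [div_pow, div_mul_cancel₀]
        positivity
      rw [← h6]
      calc (t/(d:ℝ))^d * (d:ℝ)^d * rexp (-t)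
          ≤ rexp t * (d:ℝ)^d * rexp (-t) := by
            exact mul_le_mul_of_nonneg_right
              (mul_le_mul_of_nonneg_right h4 (by positivity)) (Real.exp_nonneg _)
        _ = (d:ℝ)^d * (rexp t * rexp (-t)) := by ring
        _ = (d:ℝ)^d := by rw [← Real.exp_add]; simp
    have hexp : (0:ℝ) ≤ rexp (-t) := Real.exp_nonneg _
    nlinarith [mul_le_mul_of_nonneg_right ha hexp]

theorem stmt1 (d : ℕ) (hd : 1 ≤ d) (β : ℝ) (hβ0 : 0 < β) (hβ : β < min 2 (d : ℝ))
    (w : EuclideanSpace ℝ (Fin d)) (hw : w ≠ 0) :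
    ∃ C : ℝ, 0 < C ∧ ∀ ε : ℝ, 0 < ε →
      ∫ r in Set.Ioc (0 : ℝ) ε,
        ∫ x : EuclideanSpace ℝ (Fin d), ∫ y : EuclideanSpace ℝ (Fin d),
          heatKernel d r x * heatKernel d r (y + w) * ‖x - y‖ ^ (-β)
        ≤ C * ε * ‖w‖ ^ (-β) := by
  classical
  have hβd : β < (d:ℝ) := lt_of_lt_of_le hβ (min_le_right _ _)
  have hw' : (0:ℝ) < ‖w‖ := norm_pos_iff.2 hw
  set ρ : ℝ := ‖w‖/4 with hρdef
  set R : ℝ := ‖w‖/2 with hRdef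
  have hρ : 0 < ρ := by rw [hρdef]; linarith
  have hR : 0 < R := by rw [hRdef]; linarith
  set k := (Metric.ball (0 : EuclideanSpace ℝ (Fin d)) R).indicator
    (fun z => ‖z‖ ^ (-β)) with hkdef
  have hk_int : Integrable k := integrable_riesz_ball d hd hβ0 hβd hR
  have hk_nonneg : ∀ z, 0 ≤ k z := fun z =>
    Set.indicator_nonneg (fun z _ => Real.rpow_nonneg (norm_nonneg z) _) z
  set Ik : ℝ := ∫ z, k z with hIkdef
  have hIk0 : 0 ≤ Ik := integral_nonneg hk_nonneg
  set c1 : ℝ := (2:ℝ)^β * ‖w‖^(-β) with hc1def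
  have hc1 : 0 < c1 :=
    mul_pos (Real.rpow_pos_of_pos two_pos β) (Real.rpow_pos_of_pos hw' _)
  set Astar : ℝ := (2*π)^(-(d:ℝ)/2) * ((ρ^2/2)^(-(d:ℝ)/2) * (1 + (d:ℝ)^d)) with hAstardef
  have hAstar0 : 0 ≤ Astar := by
    rw [hAstardef]
    have hd0 : (0:ℝ) ≤ (d:ℝ) := Nat.cast_nonneg d
    positivity
  set M0 : ℝ := c1 + 2 * (Astar * Ik) with hM0def
  have hM00 : 0 < M0 := by nlinarith [mul_nonneg hAstar0 hIk0]
  -- the uniform-in-r bound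
  have main : ∀ r : ℝ, 0 < r →
      (∫ x : EuclideanSpace ℝ (Fin d), ∫ y : EuclideanSpace ℝ (Fin d),
        heatKernel d r x * heatKernel d r (y + w) * ‖x - y‖ ^ (-β)) ≤ M0 := by
    intro r hr
    have h2πr : (0:ℝ) < 2*π*r := by
      have := Real.pi_pos; nlinarith
    have hp_int : Integrable (heatKernel d r) := integrable_heatKernel d hr
    have hp_nn : ∀ x : EuclideanSpace ℝ (Fin d), 0 ≤ heatKernel d r x := fun x =>
      mul_nonneg (Real.rpow_nonneg h2πr.le _) (Real.exp_nonneg _)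
    have hq_int : Integrable (fun y : EuclideanSpace ℝ (Fin d) => heatKernel d r (y + w)) :=
      hp_int.comp_add_right w
    have hq_nn : ∀ y : EuclideanSpace ℝ (Fin d), 0 ≤ heatKernel d r (y+w) := fun y => hp_nn _
    set A' : ℝ := (2*π*r)^(-(d:ℝ)/2) * rexp (-(ρ^2/2)/r) with hA'def
    have hA'0 : 0 ≤ A' := mul_nonneg (Real.rpow_nonneg h2πr.le _) (Real.exp_nonneg _)
    have hA'le : A' ≤ Astar := gauss_factor_le d hd hr (by positivity)
    have hub : ∀ z : EuclideanSpace ℝ (Fin d), ρ ≤ ‖z‖ → heatKernel d r z ≤ A' := by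
      intro z hz
      rw [heatKernel, hA'def]
      apply mul_le_mul_of_nonneg_left _ (Real.rpow_nonneg h2πr.le _)
      apply Real.exp_le_exp.2
      rw [div_le_div_iff₀ (by linarith) hr]
      have h1 : ρ^2 ≤ ‖z‖^2 := by nlinarith [norm_nonneg z]
      nlinarith
    have hPQ : ∀ x y : EuclideanSpace ℝ (Fin d), ‖x - y‖ < R →
        heatKernel d r x * heatKernel d r (y+w) ≤
          A' * (heatKernel d r x + heatKernel d r (y+w)) := by
      intro x y hxy
      rcases le_or_gt ρ ‖x‖ with h | h
      · have h1 := hub x h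
        nlinarith [hq_nn y, mul_le_mul_of_nonneg_right h1 (hq_nn y),
          mul_nonneg hA'0 (hp_nn x)]
      · have hyw : ρ ≤ ‖y + w‖ := by
          have e : w = ((y + w) - x) + (x - y) := by abel
          have t1 : ‖w‖ ≤ ‖(y+w) - x‖ + ‖x - y‖ := by
            calc ‖w‖ = ‖((y+w) - x) + (x - y)‖ := by rw [← e]
              _ ≤ ‖(y+w) - x‖ + ‖x - y‖ := norm_add_le _ _
          have t2 : ‖(y+w) - x‖ ≤ ‖y+w‖ + ‖x‖ := norm_sub_le _ _
          rw [hρdef]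
          rw [hρdef] at h
          rw [hRdef] at hxy
          linarith
        have h1 := hub (y+w) hyw
        nlinarith [hp_nn x, mul_le_mul_of_nonneg_left h1 (hp_nn x),
          mul_nonneg hA'0 (hq_nn y)]
    have hfh : ∀ x y : EuclideanSpace ℝ (Fin d),
        heatKernel d r x * heatKernel d r (y+w) * ‖x - y‖^(-β) ≤
          c1 * heatKernel d r x * heatKernel d r (y+w)
            + ((A' * heatKernel d r x) * k (x - y)
              + A' * (heatKernel d r (y+w) * k (x - y))) := by
      intro x y
      rcases lt_or_ge ‖x - y‖ R with hlt | hge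
      · have hk_eq : k (x - y) = ‖x - y‖^(-β) := by
          rw [hkdef]
          exact Set.indicator_of_mem (mem_ball_zero_iff.2 hlt) _
        rw [hk_eq]
        have h2 := mul_le_mul_of_nonneg_right (hPQ x y hlt)
          (Real.rpow_nonneg (norm_nonneg (x-y)) (-β))
        nlinarith [mul_nonneg (mul_nonneg hc1.le (hp_nn x)) (hq_nn y)]
      · have hk0 : k (x - y) = 0 := by
          rw [hkdef]
          exact Set.indicator_of_notMem (by rw [mem_ball_zero_iff]; exact not_lt.2 hge) _
        rw [hk0]
        have ht : ‖x - y‖^(-β) ≤ c1 := by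
          have h1 : ‖x-y‖^(-β) ≤ R^(-β) :=
            Real.rpow_le_rpow_of_nonpos hR hge (by linarith)
          have h2 : R^(-β) = c1 := by
            rw [hRdef, hc1def, Real.div_rpow (norm_nonneg w) (by norm_num : (0:ℝ) ≤ 2),
              Real.rpow_neg (by norm_num : (0:ℝ) ≤ 2), div_eq_mul_inv, inv_inv, mul_comm]
          linarith
        have h3 := mul_le_mul_of_nonneg_left ht (mul_nonneg (hp_nn x) (hq_nn y))
        nlinarith [h3]
    have hq_bdd : ∃ C, ∀ y : EuclideanSpace ℝ (Fin d), ‖heatKernel d r (y+w)‖ ≤ C := by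
      refine ⟨(2*π*r)^(-(d:ℝ)/2), fun y => ?_⟩
      rw [Real.norm_eq_abs, abs_of_nonneg (hq_nn y)]
      rw [heatKernel]
      apply mul_le_of_le_one_right (Real.rpow_nonneg h2πr.le _)
      apply Real.exp_le_one_iff.2
      apply div_nonpos_of_nonpos_of_nonneg (neg_nonpos.2 (by positivity))
      linarith
    have ht3 : ∀ x : EuclideanSpace ℝ (Fin d),
        Integrable (fun y => heatKernel d r (y+w) * k (x - y)) := fun x =>
      (hk_int.comp_sub_left x).bdd_mul hq_int.aestronglyMeasurable (Filter.Eventually.of_forall hq_bdd.choose_spec)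
    have hq_eq_one : ∫ y : EuclideanSpace ℝ (Fin d), heatKernel d r (y + w) = 1 := by
      rw [integral_add_right_eq_self (heatKernel d r) w]
      exact integral_heatKernel d hr
    have hIkx : ∀ x : EuclideanSpace ℝ (Fin d), (∫ y, k (x - y)) = Ik := fun x =>
      integral_sub_left_eq_self k volume x
    have hconv_eq : ∀ x, convolution (fun y : EuclideanSpace ℝ (Fin d) => heatKernel d r (y + w))
        k (ContinuousLinearMap.mul ℝ ℝ) volume x
        = ∫ y, heatKernel d r (y+w) * k (x - y) := by
      intro x
      rw [convolution_def]
      simp only [ContinuousLinearMap.mul_apply']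
    have hconv_int : Integrable (convolution (fun y : EuclideanSpace ℝ (Fin d) => heatKernel d r (y + w))
        k (ContinuousLinearMap.mul ℝ ℝ) volume) := hq_int.integrable_convolution _ hk_int
    have hH_eq : ∀ x : EuclideanSpace ℝ (Fin d),
        (∫ y : EuclideanSpace ℝ (Fin d), c1 * heatKernel d r x * heatKernel d r (y+w)
          + ((A' * heatKernel d r x) * k (x - y)
            + A' * (heatKernel d r (y+w) * k (x - y))))
        = c1 * heatKernel d r x + (A' * heatKernel d r x) * Ik
          + A' * convolution (fun y : EuclideanSpace ℝ (Fin d) => heatKernel d r (y + w))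
              k (ContinuousLinearMap.mul ℝ ℝ) volume x := by
      intro x
      have j1 : Integrable (fun y : EuclideanSpace ℝ (Fin d) =>
          c1 * heatKernel d r x * heatKernel d r (y+w)) := hq_int.const_mul _
      have j2 : Integrable (fun y : EuclideanSpace ℝ (Fin d) =>
          (A' * heatKernel d r x) * k (x - y)) := (hk_int.comp_sub_left x).const_mul _
      have j3 : Integrable (fun y : EuclideanSpace ℝ (Fin d) =>
          A' * (heatKernel d r (y+w) * k (x - y))) := (ht3 x).const_mul _
      have j23 : Integrable (fun y : EuclideanSpace ℝ (Fin d) =>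
          (A' * heatKernel d r x) * k (x - y)
            + A' * (heatKernel d r (y+w) * k (x - y))) := by exact j2.add j3
      rw [integral_add j1 j23, integral_add j2 j3,
        MeasureTheory.integral_const_mul, MeasureTheory.integral_const_mul,
        MeasureTheory.integral_const_mul, hq_eq_one, hIkx x, hconv_eq x]
      ring
    have i1 : Integrable (fun x : EuclideanSpace ℝ (Fin d) => c1 * heatKernel d r x) :=
      hp_int.const_mul c1
    have i2 : Integrable (fun x : EuclideanSpace ℝ (Fin d) => (A' * heatKernel d r x) * Ik) :=
      (hp_int.const_mul A').mul_const Ik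
    have i12 : Integrable (fun x : EuclideanSpace ℝ (Fin d) =>
        c1 * heatKernel d r x + (A' * heatKernel d r x) * Ik) := by exact i1.add i2
    have i3 : Integrable (fun x : EuclideanSpace ℝ (Fin d) =>
        A' * convolution (fun y : EuclideanSpace ℝ (Fin d) => heatKernel d r (y + w))
          k (ContinuousLinearMap.mul ℝ ℝ) volume x) := hconv_int.const_mul A'
    have hH_int : Integrable (fun x : EuclideanSpace ℝ (Fin d) =>
        c1 * heatKernel d r x + (A' * heatKernel d r x) * Ik
          + A' * convolution (fun y : EuclideanSpace ℝ (Fin d) => heatKernel d r (y + w))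
              k (ContinuousLinearMap.mul ℝ ℝ) volume x) := by exact i12.add i3
    have hFr_le : (∫ x : EuclideanSpace ℝ (Fin d), ∫ y : EuclideanSpace ℝ (Fin d),
        heatKernel d r x * heatKernel d r (y + w) * ‖x - y‖ ^ (-β)) ≤
        ∫ x : EuclideanSpace ℝ (Fin d),
          (c1 * heatKernel d r x + (A' * heatKernel d r x) * Ik + A' * convolution (fun y : EuclideanSpace ℝ (Fin d) => heatKernel d r (y + w))
              k (ContinuousLinearMap.mul ℝ ℝ) volume x) := by
      apply integral_mono_of_nonneg
      · exact Filter.Eventually.of_forall fun x => integral_nonneg fun y =>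
          mul_nonneg (mul_nonneg (hp_nn x) (hq_nn y))
            (Real.rpow_nonneg (norm_nonneg _) _)
      · exact hH_int
      · refine Filter.Eventually.of_forall fun x => ?_
        calc (∫ y : EuclideanSpace ℝ (Fin d),
              heatKernel d r x * heatKernel d r (y + w) * ‖x - y‖ ^ (-β))
            ≤ ∫ y : EuclideanSpace ℝ (Fin d), (c1 * heatKernel d r x * heatKernel d r (y+w)
              + ((A' * heatKernel d r x) * k (x - y)
                + A' * (heatKernel d r (y+w) * k (x - y)))) := by
              apply integral_mono_of_nonneg
              · exact Filter.Eventually.of_forall fun y =>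
                  mul_nonneg (mul_nonneg (hp_nn x) (hq_nn y))
                    (Real.rpow_nonneg (norm_nonneg _) _)
              · exact (hq_int.const_mul _).add
                  (((hk_int.comp_sub_left x).const_mul _).add ((ht3 x).const_mul _))
              · exact Filter.Eventually.of_forall fun y => hfh x y
          _ = c1 * heatKernel d r x + (A' * heatKernel d r x) * Ik
              + A' * convolution (fun y : EuclideanSpace ℝ (Fin d) => heatKernel d r (y + w))
                  k (ContinuousLinearMap.mul ℝ ℝ) volume x := hH_eq x
    have hHval : (∫ x : EuclideanSpace ℝ (Fin d),
        (c1 * heatKernel d r x + (A' * heatKernel d r x) * Ik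
          + A' * convolution (fun y : EuclideanSpace ℝ (Fin d) => heatKernel d r (y + w))
              k (ContinuousLinearMap.mul ℝ ℝ) volume x))
        = c1 + A' * Ik + A' * (1 * Ik) := by
      rw [integral_add i12 i3, integral_add i1 i2,
        MeasureTheory.integral_const_mul, MeasureTheory.integral_mul_const,
        MeasureTheory.integral_const_mul, MeasureTheory.integral_const_mul,
        integral_heatKernel d hr,
        integral_convolution (ContinuousLinearMap.mul ℝ ℝ) hq_int hk_int]
      simp only [ContinuousLinearMap.mul_apply']
      rw [hq_eq_one, ← hIkdef]
      ring
    calc (∫ x : EuclideanSpace ℝ (Fin d), ∫ y : EuclideanSpace ℝ (Fin d),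
          heatKernel d r x * heatKernel d r (y + w) * ‖x - y‖ ^ (-β))
        ≤ ∫ x : EuclideanSpace ℝ (Fin d),
            (c1 * heatKernel d r x + (A' * heatKernel d r x) * Ik
              + A' * convolution (fun y : EuclideanSpace ℝ (Fin d) => heatKernel d r (y + w))
                  k (ContinuousLinearMap.mul ℝ ℝ) volume x) := hFr_le
      _ = c1 + A' * Ik + A' * (1 * Ik) := hHval
      _ ≤ M0 := by
          rw [hM0def]
          nlinarith [mul_le_mul_of_nonneg_right hA'le hIk0]
  -- conclusion
  refine ⟨(M0 + 1) * ‖w‖^β,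
    mul_pos (by linarith) (Real.rpow_pos_of_pos hw' β), ?_⟩
  intro ε hε
  have hFnn : ∀ r ∈ Set.Ioc (0:ℝ) ε, (0:ℝ) ≤
      ∫ x : EuclideanSpace ℝ (Fin d), ∫ y : EuclideanSpace ℝ (Fin d),
        heatKernel d r x * heatKernel d r (y + w) * ‖x - y‖ ^ (-β) := by
    intro r hrmem
    have hr : 0 < r := hrmem.1
    have h2πr : (0:ℝ) < 2*π*r := by have := Real.pi_pos; nlinarith
    exact integral_nonneg fun x => integral_nonneg fun y =>
      mul_nonneg (mul_nonneg
        (mul_nonneg (Real.rpow_nonneg h2πr.le _) (Real.exp_nonneg _))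
        (mul_nonneg (Real.rpow_nonneg h2πr.le _) (Real.exp_nonneg _)))
        (Real.rpow_nonneg (norm_nonneg _) _)
  have hkey : (∫ r in Set.Ioc (0:ℝ) ε,
      ∫ x : EuclideanSpace ℝ (Fin d), ∫ y : EuclideanSpace ℝ (Fin d),
        heatKernel d r x * heatKernel d r (y + w) * ‖x - y‖ ^ (-β)) ≤ M0 * ε := by
    by_cases hmeas : AEStronglyMeasurable (fun r : ℝ =>
        ∫ x : EuclideanSpace ℝ (Fin d), ∫ y : EuclideanSpace ℝ (Fin d),
          heatKernel d r x * heatKernel d r (y + w) * ‖x - y‖ ^ (-β))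
        (volume.restrict (Set.Ioc 0 ε))
    · have h1 := norm_setIntegral_le_of_norm_le_const (μ := volume)
        (s := Set.Ioc (0:ℝ) ε) (C := M0)
        (f := fun r : ℝ => ∫ x : EuclideanSpace ℝ (Fin d), ∫ y : EuclideanSpace ℝ (Fin d),
          heatKernel d r x * heatKernel d r (y + w) * ‖x - y‖ ^ (-β))
        (by rw [Real.volume_Ioc]; exact ENNReal.ofReal_lt_top)
        (fun r hrmem => by
          rw [Real.norm_eq_abs, abs_of_nonneg (hFnn r hrmem)]
          exact main r hrmem.1)
      rw [Real.volume_real_Ioc, sub_zero, max_eq_left hε.le] at h1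
      calc (∫ r in Set.Ioc (0:ℝ) ε,
          ∫ x : EuclideanSpace ℝ (Fin d), ∫ y : EuclideanSpace ℝ (Fin d),
            heatKernel d r x * heatKernel d r (y + w) * ‖x - y‖ ^ (-β))
          ≤ |∫ r in Set.Ioc (0:ℝ) ε,
            ∫ x : EuclideanSpace ℝ (Fin d), ∫ y : EuclideanSpace ℝ (Fin d),
              heatKernel d r x * heatKernel d r (y + w) * ‖x - y‖ ^ (-β)| := le_abs_self _
        _ ≤ M0 * ε := by rw [← Real.norm_eq_abs]; exact h1
    · rw [integral_undef (fun h => hmeas h.aestronglyMeasurable)]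
      exact (mul_pos hM00 hε).le
  have hpow : ‖w‖^β * ‖w‖^(-β) = 1 := by
    rw [← Real.rpow_add hw']
    simp
  have hfin : (M0 + 1) * ‖w‖^β * ε * ‖w‖^(-β) = (M0 + 1) * ε := by
    calc (M0 + 1) * ‖w‖^β * ε * ‖w‖^(-β) = (M0 + 1) * ε * (‖w‖^β * ‖w‖^(-β)) := by ring
      _ = (M0 + 1) * ε := by rw [hpow, mul_one]
  rw [hfin]
  nlinarith [hkey, hM00, hε]
end

section
/- Let max(d−2,0) < α < d with d ∈ {1,2,3}. There exists C > 0 such that for all 0 < ε < 1, ∫_0^ε ∫_{ℝ^d} (sin(r|ξ|))²/|ξ|² · (1 + |ξ|²)^{−α/2} dξ dr ≥ C ε^{α + 3 − d}. -/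
open MeasureTheory Real Metric Set

lemma sinsq_upper {r x : ℝ} (hr0 : 0 < r) (hr1 : r ≤ 1) (hx : 0 ≤ x) :
    sin (r * x) ^ 2 / x ^ 2 ≤ 2 * (1 + x ^ 2)⁻¹ := by
  rcases eq_or_lt_of_le hx with h0 | hx
  · rw [← h0]; simp
  have hx2 : (0:ℝ) < x ^ 2 := by positivity
  have h1 : (0:ℝ) < 1 + x ^ 2 := by positivity
  have hs1 : sin (r * x) ^ 2 ≤ 1 := sin_sq_le_one _
  have hs2 : sin (r * x) ^ 2 ≤ x ^ 2 := by
    have h1' : |sin (r * x)| ≤ |r * x| := abs_sin_le_abs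
    have h2 : |r * x| ≤ x := by
      rw [abs_of_nonneg (by positivity)]
      nlinarith
    calc sin (r * x) ^ 2 = |sin (r * x)| ^ 2 := (sq_abs _).symm
      _ ≤ x ^ 2 := by nlinarith [abs_nonneg (sin (r*x))]
  have key : sin (r * x) ^ 2 * (1 + x ^ 2) ≤ 2 * x ^ 2 := by nlinarith
  rw [div_le_iff₀ hx2]
  nlinarith [mul_inv_cancel₀ (ne_of_gt h1), inv_nonneg.mpr h1.le,
    mul_le_mul_of_nonneg_right key (inv_nonneg.mpr h1.le)]

lemma sinsq_lower {r x : ℝ} (hr : 0 < r) (hx : 0 < x) (hrx : r * x ≤ 1) :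
    r ^ 2 / 4 ≤ sin (r * x) ^ 2 / x ^ 2 := by
  have h0 : 0 < r * x := mul_pos hr hx
  have hcube : r * x - (r * x) ^ 3 / 4 < sin (r * x) := by have := sin_gt_sub_cube h0; linarith [pow_pos h0 3]
  have hc : (r * x) ^ 3 ≤ r * x := by
    nlinarith [mul_nonneg (mul_nonneg h0.le (sub_nonneg.mpr hrx))
      (by positivity : (0:ℝ) ≤ 1 + r * x)]
  have h2 : r * x / 2 ≤ sin (r * x) := by linarith
  have h3 : (r * x / 2) ^ 2 ≤ sin (r * x) ^ 2 := by
    nlinarith [h2, mul_pos h0 h0]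
  rw [div_le_div_iff₀ (by norm_num : (0:ℝ) < 4) (by positivity : (0:ℝ) < x ^ 2)]
  nlinarith [h3]


theorem stmt11 (d : ℕ) (hd : d = 1 ∨ d = 2 ∨ d = 3) (α : ℝ)
    (hα0 : max ((d : ℝ) - 2) 0 < α) (hα1 : α < d) :
    ∃ C : ℝ, 0 < C ∧ ∀ ε : ℝ, 0 < ε → ε < 1 →
      C * ε ^ (α + 3 - d) ≤
        ∫ r in Set.Ioc (0 : ℝ) ε,
          ∫ ξ : EuclideanSpace ℝ (Fin d),
            (Real.sin (r * ‖ξ‖)) ^ 2 / ‖ξ‖ ^ 2 * (1 + ‖ξ‖ ^ 2) ^ (-α / 2) := by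
  have hd1 : 1 ≤ d := by rcases hd with h | h | h <;> omega
  have hαpos : 0 < α := lt_of_le_of_lt (le_max_right _ _) hα0
  have hdα : (d : ℝ) - 2 < α := lt_of_le_of_lt (le_max_left _ _) hα0
  set f : ℝ → EuclideanSpace ℝ (Fin d) → ℝ :=
    fun r ξ => sin (r * ‖ξ‖) ^ 2 / ‖ξ‖ ^ 2 * (1 + ‖ξ‖ ^ 2) ^ (-α / 2) with hf
  -- majorant
  set g : EuclideanSpace ℝ (Fin d) → ℝ :=
    fun ξ => 2 * ((1:ℝ) + ‖ξ‖ ^ 2) ^ (-(α + 2) / 2) with hg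
  have hg_int : Integrable g := by
    refine Integrable.const_mul ?_ 2
    refine integrable_rpow_neg_one_add_norm_sq ?_
    rw [finrank_euclideanSpace_fin]
    linarith
  have hf_nonneg : ∀ r : ℝ, ∀ ξ, 0 ≤ f r ξ := fun r ξ => by positivity
  have hf_le_g : ∀ r : ℝ, 0 < r → r ≤ 1 → ∀ ξ, f r ξ ≤ g ξ := by
    intro r hr0 hr1 ξ
    have h1 : (0:ℝ) < 1 + ‖ξ‖ ^ 2 := by positivity
    have e1 : ((1:ℝ) + ‖ξ‖ ^ 2) ^ (-(α + 2) / 2)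
        = (1 + ‖ξ‖ ^ 2)⁻¹ * (1 + ‖ξ‖ ^ 2) ^ (-α / 2) := by
      rw [← Real.rpow_neg_one (1 + ‖ξ‖ ^ 2), ← Real.rpow_add h1]
      ring_nf
    simp only [hg, e1, hf]
    rw [← mul_assoc]
    exact mul_le_mul_of_nonneg_right (sinsq_upper hr0 hr1 (norm_nonneg ξ))
      (Real.rpow_nonneg h1.le _)
  have hf_meas : Measurable fun p : ℝ × EuclideanSpace ℝ (Fin d) => f p.1 p.2 := by
    simp only [hf]; fun_prop
  have hf_meas1 : ∀ r : ℝ, Measurable (f r) := by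
    intro r; simp only [hf]; fun_prop
  have hf_int : ∀ r : ℝ, 0 < r → r ≤ 1 → Integrable (f r) := by
    intro r hr0 hr1
    refine hg_int.mono' (hf_meas1 r).aestronglyMeasurable (ae_of_all _ fun ξ => ?_)
    rw [Real.norm_eq_abs, abs_of_nonneg (hf_nonneg r ξ)]
    exact hf_le_g r hr0 hr1 ξ
  set F : ℝ → ℝ := fun r => ∫ ξ, f r ξ with hF
  have hF_meas : StronglyMeasurable F := hf_meas.stronglyMeasurable.integral_prod_right'
  set M : ℝ := ∫ ξ, g ξ with hM
  have hF_bound : ∀ r : ℝ, 0 < r → r ≤ 1 → F r ≤ M :=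
    fun r hr0 hr1 => integral_mono (hf_int r hr0 hr1) hg_int (hf_le_g r hr0 hr1)
  have hF_nonneg : ∀ r, 0 ≤ F r := fun r => integral_nonneg (hf_nonneg r)
  -- volume of unit ball
  set v : ℝ := (volume (ball (0 : EuclideanSpace ℝ (Fin d)) 1)).toReal with hv
  have hv_pos : 0 < v := by
    rw [hv]
    refine ENNReal.toReal_pos (ne_of_gt (measure_ball_pos _ _ one_pos)) measure_ball_lt_top.ne
  refine ⟨v * 2 ^ (-α / 2) / 24, by positivity, fun ε hε hε1 => ?_⟩
  have hεinv : (0:ℝ) < ε⁻¹ := by positivity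
  have hεinv1 : (1:ℝ) ≤ ε⁻¹ := by rw [le_inv_comm₀] <;> simp [hε, hε1.le]
  -- the annulus
  set S : Set (EuclideanSpace ℝ (Fin d)) :=
    ball 0 ε⁻¹ \ closedBall 0 (ε⁻¹ / 2) with hS
  have hSm : MeasurableSet S := measurableSet_ball.diff measurableSet_closedBall
  have hsub : closedBall (0 : EuclideanSpace ℝ (Fin d)) (ε⁻¹ / 2) ⊆ ball 0 ε⁻¹ :=
    closedBall_subset_ball (by linarith)
  have hSfin : volume S ≠ ⊤ :=
    ((measure_mono diff_subset).trans_lt measure_ball_lt_top).ne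
  set m : ℝ := (volume S).toReal with hm
  have hμS : m = (ε⁻¹ ^ d - (ε⁻¹ / 2) ^ d) * v := by
    rw [hm, hS, measure_diff hsub measurableSet_closedBall.nullMeasurableSet
      measure_closedBall_lt_top.ne,
      Measure.addHaar_ball_of_pos _ _ hεinv,
      Measure.addHaar_closedBall _ _ (by positivity : (0:ℝ) ≤ ε⁻¹ / 2),
      finrank_euclideanSpace_fin,
      ← ENNReal.sub_mul (fun _ _ => measure_ball_lt_top.ne),
      ← ENNReal.ofReal_sub _ (by positivity),
      ENNReal.toReal_mul, ENNReal.toReal_ofReal]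
    have : (ε⁻¹ / 2) ^ d ≤ ε⁻¹ ^ d := by
      apply pow_le_pow_left₀ (by positivity); linarith
    linarith
  have hm_lower : ε⁻¹ ^ d * v / 2 ≤ m := by
    rw [hμS]
    have h2d : (2:ℝ) ≤ 2 ^ d := by
      calc (2:ℝ) = 2 ^ 1 := (pow_one 2).symm
        _ ≤ 2 ^ d := pow_le_pow_right₀ one_le_two hd1
    have hp : (ε⁻¹ / 2) ^ d = ε⁻¹ ^ d / 2 ^ d := div_pow _ _ _
    have hεd : (0:ℝ) < ε⁻¹ ^ d := by positivity
    have h2dpos : (0:ℝ) < 2 ^ d := by positivity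
    have : (ε⁻¹ / 2) ^ d ≤ ε⁻¹ ^ d / 2 := by
      rw [hp]
      apply div_le_div_of_nonneg_left hεd.le (by norm_num) h2d
    nlinarith [hv_pos]
  -- pointwise lower bound on S
  set K : ℝ := 2 ^ (-α / 2) * ε ^ α with hK
  have hK_pos : 0 < K := by positivity
  have hpt : ∀ r ∈ Ioc (0:ℝ) ε, ∀ ξ ∈ S, r ^ 2 / 4 * K ≤ f r ξ := by
    rintro r ⟨hr0, hrε⟩ ξ hξ
    obtain ⟨hξ1, hξ2⟩ := hξ
    rw [mem_ball_zero_iff] at hξ1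
    rw [mem_closedBall, dist_zero_right, not_le] at hξ2
    have hξpos : 0 < ‖ξ‖ := lt_of_le_of_lt (by positivity) hξ2
    have hrx : r * ‖ξ‖ ≤ 1 := by
      calc r * ‖ξ‖ ≤ ε * ε⁻¹ :=
            mul_le_mul hrε hξ1.le (norm_nonneg _) hε.le
        _ = 1 := mul_inv_cancel₀ hε.ne'
    have h1 : (0:ℝ) < 1 + ‖ξ‖ ^ 2 := by positivity
    have hrpow : K ≤ (1 + ‖ξ‖ ^ 2) ^ (-α / 2) := by
      have hle : 1 + ‖ξ‖ ^ 2 ≤ 2 * ε⁻¹ ^ 2 := by nlinarith [hξ1, hεinv1]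
      have h2 : (2 * ε⁻¹ ^ 2) ^ (-α / 2) ≤ (1 + ‖ξ‖ ^ 2) ^ (-α / 2) :=
        Real.rpow_le_rpow_of_nonpos h1 hle (by linarith)
      have h3 : (2 * ε⁻¹ ^ 2) ^ (-α / 2) = K := by
        rw [hK, Real.mul_rpow (by norm_num) (by positivity), inv_pow,
          Real.inv_rpow (by positivity), ← Real.rpow_natCast ε 2,
          ← Real.rpow_mul hε.le, ← Real.rpow_neg hε.le]
        congr 1; ring
      rw [← h3]; exact h2
    calc r ^ 2 / 4 * K ≤ (sin (r * ‖ξ‖) ^ 2 / ‖ξ‖ ^ 2) * ((1 + ‖ξ‖ ^ 2) ^ (-α / 2)) := by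
          apply mul_le_mul (sinsq_lower hr0 hξpos hrx) hrpow hK_pos.le (by positivity)
      _ = f r ξ := rfl
  -- lower bound for F on Ioc 0 ε
  have hFlow : ∀ r ∈ Ioc (0:ℝ) ε, r ^ 2 / 4 * K * m ≤ F r := by
    rintro r hr
    have hr1 : r ≤ 1 := hr.2.trans hε1.le
    calc r ^ 2 / 4 * K * m ≤ ∫ ξ in S, f r ξ :=
          by
            have := setIntegral_ge_of_const_le_real hSm hSfin (hpt r hr) ((hf_int r hr.1 hr1).integrableOn)
            exact this
      _ ≤ F r := setIntegral_le_integral (hf_int r hr.1 hr1)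
            (ae_of_all _ (hf_nonneg r))
  -- outer integral
  have hFint : IntegrableOn F (Ioc 0 ε) := by
    refine Integrable.mono' (integrable_const M)
      hF_meas.aestronglyMeasurable.restrict ?_
    rw [ae_restrict_iff' measurableSet_Ioc]
    refine ae_of_all _ fun r hr => ?_
    rw [Real.norm_eq_abs, abs_of_nonneg (hF_nonneg r)]
    exact hF_bound r hr.1 (hr.2.trans hε1.le)
  have houter : ∫ r in Ioc (0:ℝ) ε, r ^ 2 / 4 * K * m ≤ ∫ r in Ioc (0:ℝ) ε, F r := by
    refine setIntegral_mono_on ?_ hFint measurableSet_Ioc hFlow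
    exact Continuous.integrableOn_Ioc ((((continuous_pow 2).div_const 4).mul continuous_const).mul continuous_const) 
  have hval : ∫ r in Ioc (0:ℝ) ε, r ^ 2 / 4 * K * m = ε ^ 3 / 3 * (K * m / 4) := by
    have : ∀ r : ℝ, r ^ 2 / 4 * K * m = (K * m / 4) * r ^ 2 := fun r => by ring
    simp_rw [this]
    rw [MeasureTheory.integral_const_mul, ← intervalIntegral.integral_of_le hε.le,
      integral_pow]
    ring
  -- conclusion
  have hεpow : ε ^ (α + 3 - (d:ℝ)) = ε ^ α * ε ^ (3:ℕ) * ε⁻¹ ^ d := by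
    rw [show α + 3 - (d:ℝ) = α + 3 + (-(d:ℝ)) by ring, Real.rpow_add hε,
      Real.rpow_add hε, Real.rpow_neg hε.le, Real.rpow_natCast, ← inv_pow,
      show ((3:ℝ)) = ((3:ℕ):ℝ) by norm_num, Real.rpow_natCast]
  have hfinal : v * 2 ^ (-α / 2) / 24 * ε ^ (α + 3 - (d:ℝ)) ≤ ε ^ 3 / 3 * (K * m / 4) := by
    rw [hεpow, hK]
    have h1 : (0:ℝ) < ε ^ α := by positivity
    have h2 : (0:ℝ) < 2 ^ (-α / 2) := by positivity
    have h3 : (0:ℝ) < ε ^ (3:ℕ) := by positivity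
    nlinarith [mul_le_mul_of_nonneg_left hm_lower
      (by positivity : (0:ℝ) ≤ ε ^ 3 / 3 * (2 ^ (-α/2) * ε ^ α / 4))]
  calc v * 2 ^ (-α / 2) / 24 * ε ^ (α + 3 - (d:ℝ)) ≤ ε ^ 3 / 3 * (K * m / 4) := hfinal
    _ = ∫ r in Ioc (0:ℝ) ε, r ^ 2 / 4 * K * m := hval.symm
    _ ≤ ∫ r in Ioc (0:ℝ) ε, F r := houter
end
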